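/- arXiv:1802.01994 — 2 statements merged into one kernel-verified Lean document; each statement's English description precedes it below -/
import Mathlib

section
/- Let A be a ring. A three-term complex J₃ →^{d₃} J₂ →^{d₂} J₁ of injective right A-modules (with d₂ ∘ d₃ = 0) is exact at J₂ and splits if and only if for every finitely generated right A-module N the induced complex Hom_A(N, J₃) → Hom_A(N, J₂) → Hom_A(N, J₁) is exact at the middle term. -/
namespace DGPaper

universe u

/-- From a retraction onto `ker d₃` we get a section of `d₃` onto its range. -/
lemma exists_section {A : Type u} [Ring A] {J₃ J₂ : Type u}
    [AddCommGroup J₃] [AddCommGroup J₂] [Module A J₃] [Module A J₂]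
    (d₃ : J₃ →ₗ[A] J₂) (r : J₃ →ₗ[A] LinearMap.ker d₃)
    (hr : ∀ x : LinearMap.ker d₃, r x = x) :
    ∃ s : LinearMap.range d₃ →ₗ[A] J₃, ∀ y : LinearMap.range d₃, d₃ (s y) = y := by
  have K : Submodule A J₃ := LinearMap.ker d₃
  let p : J₃ →ₗ[A] J₃ := LinearMap.id - (LinearMap.ker d₃).subtype.comp r
  have hker : LinearMap.ker d₃ ≤ LinearMap.ker p := by
    intro x hx
    have hx' : (r x : J₃) = x := congrArg Subtype.val (hr ⟨x, hx⟩)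
    simp [p, LinearMap.mem_ker, hx']
  let q := (LinearMap.ker d₃).liftQ p hker
  let e := d₃.quotKerEquivRange
  refine ⟨q.comp (e.symm : _ →ₗ[A] _), fun y => ?_⟩
  obtain ⟨z, hz⟩ := Submodule.Quotient.mk_surjective _ (e.symm y)
  have h1 : d₃ (q (Submodule.Quotient.mk z)) = d₃ z := by
    have : d₃ ((r z : J₃)) = 0 := (r z).2
    simp [q, p, Submodule.liftQ_apply, this]
  have h2 : (e (Submodule.Quotient.mk z) : J₂) = d₃ z :=
    d₃.quotKerEquivRange_apply_mk z
  have h3 : e (Submodule.Quotient.mk z) = y := by rw [hz]; exact e.apply_symm_apply y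
  calc d₃ (q (e.symm y)) = d₃ (q (Submodule.Quotient.mk z)) := by rw [hz]
    _ = d₃ z := h1
    _ = (y : J₂) := by rw [← h2, h3]

/-- **Statement 12** (Lemma 3.18 of the paper).  Let `A` be a ring.  A
three-term complex `J₃ → J₂ → J₁` of injective `A`-modules (with
`d₂ ∘ d₃ = 0`) is exact at `J₂` and splits (i.e. `ker d₃` is a direct summand
of `J₃` and `ker d₂` is a direct summand of `J₂`) if and only if for every
finitely generated `A`-module `N` the induced complex
`Hom_A(N, J₃) → Hom_A(N, J₂) → Hom_A(N, J₁)` is exact at the middle term. -/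
theorem statement12 (A : Type u) [Ring A]
    (J₃ J₂ J₁ : Type u) [AddCommGroup J₃] [AddCommGroup J₂] [AddCommGroup J₁]
    [Module A J₃] [Module A J₂] [Module A J₁]
    (hJ₃ : Module.Injective A J₃) (hJ₂ : Module.Injective A J₂)
    (hJ₁ : Module.Injective A J₁)
    (d₃ : J₃ →ₗ[A] J₂) (d₂ : J₂ →ₗ[A] J₁) (hd : d₂.comp d₃ = 0) :
    (LinearMap.range d₃ = LinearMap.ker d₂ ∧
      (∃ r : J₃ →ₗ[A] LinearMap.ker d₃, ∀ x : LinearMap.ker d₃, r x = x) ∧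
      (∃ r : J₂ →ₗ[A] LinearMap.ker d₂, ∀ x : LinearMap.ker d₂, r x = x)) ↔
    (∀ (N : Type u) (_ : AddCommGroup N) (_ : Module A N), Module.Finite A N →
      ∀ g : N →ₗ[A] J₂, d₂.comp g = 0 → ∃ h : N →ₗ[A] J₃, d₃.comp h = g) := by
  constructor
  · rintro ⟨h₁, ⟨r, hr⟩, -⟩ N _ _ _ g hg
    obtain ⟨s, hs⟩ := exists_section d₃ r hr
    have hmem : ∀ n : N, g n ∈ LinearMap.range d₃ := fun n => by
      rw [h₁, LinearMap.mem_ker]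
      exact congrFun (congrArg DFunLike.coe hg) n
    refine ⟨s.comp (g.codRestrict _ hmem), ?_⟩
    ext n
    simpa using hs (g.codRestrict _ hmem n)
  · intro H
    -- exactness at J₂
    have h₁ : LinearMap.range d₃ = LinearMap.ker d₂ := by
      apply le_antisymm
      · rintro _ ⟨x, rfl⟩
        exact congrFun (congrArg DFunLike.coe hd) x
      · intro y hy
        have hg : d₂.comp (LinearMap.toSpanSingleton A J₂ y) = 0 := by
          ext
          simp [LinearMap.mem_ker.mp hy]
        obtain ⟨h, hh⟩ := H A _ _ inferInstance (LinearMap.toSpanSingleton A J₂ y) hg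
        refine ⟨h 1, ?_⟩
        have := congrFun (congrArg DFunLike.coe hh) 1
        simpa using this
    -- ker d₃ is injective, via Baer
    have baer₃ : Module.Baer A (LinearMap.ker d₃) := by
      intro I f
      obtain ⟨F, hF⟩ := hJ₃.out I.subtype Subtype.val_injective
        ((LinearMap.ker d₃).subtype.comp f)
      -- d₃ ∘ F vanishes on I, so factors through A ⧸ I
      have hIk : (I : Submodule A A) ≤ LinearMap.ker (d₃.comp F) := by
        intro x hx
        have := hF ⟨x, hx⟩
        simp only [LinearMap.mem_ker, LinearMap.comp_apply]
        rw [show F x = _ from this]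
        exact (f ⟨x, hx⟩).2
      let g : (A ⧸ (I : Submodule A A)) →ₗ[A] J₂ := Submodule.liftQ _ (d₃.comp F) hIk
      haveI : Module.Finite A (A ⧸ (I : Submodule A A)) :=
        Module.Finite.of_surjective (I : Submodule A A).mkQ (Submodule.mkQ_surjective _)
      have hg : d₂.comp g = 0 := by
        refine Submodule.linearMap_qext _ ?_
        ext
        have := congrFun (congrArg DFunLike.coe hd) (F 1)
        simpa [g] using this
      obtain ⟨h, hh⟩ := H (A ⧸ (I : Submodule A A)) _ _ inferInstance g hg
      let F' : A →ₗ[A] J₃ := F - h.comp (I : Submodule A A).mkQ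
      have hF'ker : ∀ a : A, F' a ∈ LinearMap.ker d₃ := by
        intro a
        have := congrFun (congrArg DFunLike.coe hh) ((I : Submodule A A).mkQ a)
        simp only [LinearMap.comp_apply] at this
        simp only [LinearMap.mem_ker, F', LinearMap.sub_apply, map_sub, LinearMap.comp_apply]
        rw [this]
        simp [g]
      refine ⟨F'.codRestrict _ hF'ker, fun x hx => ?_⟩
      apply Subtype.ext
      have hxq : (Submodule.Quotient.mk x : A ⧸ (I : Submodule A A)) = 0 :=
        (Submodule.Quotient.mk_eq_zero _).mpr hx
      have hFx : F x = f ⟨x, hx⟩ := hF ⟨x, hx⟩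
      show F' x = (f ⟨x, hx⟩ : J₃)
      show F x - h ((I : Submodule A A).mkQ x) = _
      rw [Submodule.mkQ_apply, hxq, map_zero, sub_zero, hFx]
    -- retraction onto ker d₃
    obtain ⟨r₃, hr₃⟩ := baer₃.injective.out (LinearMap.ker d₃).subtype
      Subtype.val_injective LinearMap.id
    -- section of d₃
    obtain ⟨s, hs⟩ := exists_section d₃ r₃ hr₃
    -- ker d₂ is injective, via Baer
    have baer₂ : Module.Baer A (LinearMap.ker d₂) := by
      intro I f
      let ι : LinearMap.ker d₂ →ₗ[A] LinearMap.range d₃ := Submodule.inclusion h₁.ge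
      obtain ⟨F, hF⟩ := hJ₃.out I.subtype Subtype.val_injective (s.comp (ι.comp f))
      have hmem : ∀ a : A, d₃ (F a) ∈ LinearMap.ker d₂ := fun a =>
        h₁ ▸ LinearMap.mem_range_self d₃ (F a)
      refine ⟨(d₃.comp F).codRestrict _ hmem, fun x hx => ?_⟩
      apply Subtype.ext
      have h4 : F x = s (ι (f ⟨x, hx⟩)) := hF ⟨x, hx⟩
      have h5 : d₃ (s (ι (f ⟨x, hx⟩))) = (ι (f ⟨x, hx⟩) : J₂) := hs _
      show d₃ (F x) = (f ⟨x, hx⟩ : J₂)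
      rw [h4, h5]
      rfl
    obtain ⟨r₂, hr₂⟩ := baer₂.injective.out (LinearMap.ker d₂).subtype
      Subtype.val_injective LinearMap.id
    exact ⟨h₁, ⟨r₃, fun x => hr₃ x⟩, ⟨r₂, fun x => hr₂ x⟩⟩

end DGPaper
end

section
/- Let A be a right Noetherian ring. A right A-module M is finitely generated if and only if for every small family {J_λ}_{λ∈Λ} of injective right A-modules the canonical homomorphism ⊕_{λ∈Λ} Hom_A(M, J_λ) → Hom_A(M, ⊕_{λ∈Λ} J_λ) is an isomorphism. -/
open scoped DirectSum

namespace DGPaper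

universe u

/-- The canonical homomorphism
`⊕_λ Hom_A(M, J_λ) → Hom_A(M, ⊕_λ J_λ)`, sending a finitely supported family
`(f_λ)` to `m ↦ (f_λ(m))_λ`. -/
noncomputable def canonHom (A : Type u) [Ring A]
    (M : Type u) [AddCommGroup M] [Module A M]
    (Λ : Type u) [DecidableEq Λ] (J : Λ → Type u)
    [∀ l, AddCommGroup (J l)] [∀ l, Module A (J l)] :
    (⨁ (l : Λ), (M →ₗ[A] J l)) →+ (M →ₗ[A] (⨁ (l : Λ), J l)) :=
  DirectSum.toAddMonoid (fun l =>
    AddMonoidHom.mk' (fun f => (DirectSum.lof A Λ J l).comp f)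
      (fun _f _g => LinearMap.comp_add _ _ _))

section Helpers

variable (A : Type u) [Ring A] (M : Type u) [AddCommGroup M] [Module A M]
  (Λ : Type u) [DecidableEq Λ] (J : Λ → Type u)
  [∀ l, AddCommGroup (J l)] [∀ l, Module A (J l)]

lemma canonHom_apply_apply (F : ⨁ (l : Λ), (M →ₗ[A] J l)) (x : M) (l : Λ) :
    canonHom A M Λ J F x l = F l x := by
  induction F using DirectSum.induction_on with
  | zero => simp
  | of l' f =>
    rw [canonHom, DirectSum.toAddMonoid_of]
    rcases eq_or_ne l' l with rfl | h
    · simp [DirectSum.lof_eq_of, DirectSum.of_eq_same]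
    · simp [DirectSum.lof_eq_of, DirectSum.of_eq_of_ne _ _ _ h.symm]
  | add F G hF hG => simp [hF, hG]

lemma sum_of_eq (S : Finset Λ) (v : ⨁ l, J l) (hv : ∀ l ∉ S, v l = 0) :
    ∑ l ∈ S, DirectSum.of J l (v l) = v := by
  classical
  refine DFinsupp.ext fun l' => ?_
  rw [DFinsupp.finset_sum_apply]
  by_cases h : l' ∈ S
  · rw [Finset.sum_eq_single l' (fun b _ hb => DirectSum.of_eq_of_ne _ _ _ hb.symm)
      (fun h' => absurd h h')]
    exact DirectSum.of_eq_same _ _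
  · rw [hv l' h, Finset.sum_eq_zero]
    intro b hb
    exact DirectSum.of_eq_of_ne _ _ _ (fun e => h (e ▸ hb))

lemma exists_directSum_coe (S : Finset Λ) (v : ∀ l, J l) (hv : ∀ l ∉ S, v l = 0) :
    ∃ F : ⨁ l, J l, ∀ l, F l = v l := by
  classical
  refine ⟨∑ l ∈ S, DirectSum.of J l (v l), fun l' => ?_⟩
  rw [DFinsupp.finset_sum_apply]
  by_cases h : l' ∈ S
  · rw [Finset.sum_eq_single l' (fun b _ hb => DirectSum.of_eq_of_ne _ _ _ hb.symm)
      (fun h' => absurd h h')]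
    exact DirectSum.of_eq_same _ _
  · rw [hv l' h, Finset.sum_eq_zero]
    intro b hb
    exact DirectSum.of_eq_of_ne _ _ _ (fun e => h (e ▸ hb))

lemma injective_directSum (hA : IsNoetherianRing A)
    (hJ : ∀ l, Module.Injective A (J l)) : Module.Injective A (⨁ l, J l) := by
  classical
  apply Module.Baer.injective
  intro I g
  obtain ⟨s, hs⟩ := (isNoetherian_def.mp hA I : I.FG)
  subst hs
  have hIdeal : ∀ x ∈ (s : Set A), x ∈ Submodule.span A (s : Set A) :=
    fun x hx => Submodule.subset_span hx
  set T : Finset Λ := s.attach.sup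
    (fun a => (g ⟨a.1, Submodule.subset_span a.2⟩).support) with hT
  have claim : ∀ (x : A) (hx : x ∈ Submodule.span A (s : Set A)),
      ∀ l ∉ T, (g ⟨x, hx⟩) l = 0 := by
    intro x hx
    induction hx using Submodule.span_induction with
    | mem a ha =>
      intro l hl
      have hmem : (g ⟨a, Submodule.subset_span ha⟩).support ≤ T :=
        Finset.le_sup (f := fun a : {x // x ∈ s} =>
          (g ⟨a.1, Submodule.subset_span a.2⟩).support) (Finset.mem_attach s ⟨a, ha⟩)
      exact DFinsupp.notMem_support_iff.mp (fun h => hl (hmem h))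
    | zero =>
      intro l _
      have h0 : g ⟨(0:A), Submodule.zero_mem _⟩ = 0 := map_zero g
      rw [h0, DFinsupp.zero_apply]
    | add a b ha hb iha ihb =>
      intro l hl
      have h1 : g ⟨a + b, Submodule.add_mem _ ha hb⟩ = g ⟨a, ha⟩ + g ⟨b, hb⟩ :=
        map_add g ⟨a, ha⟩ ⟨b, hb⟩
      rw [h1, DFinsupp.add_apply, iha l hl, ihb l hl, add_zero]
    | smul r a ha iha =>
      intro l hl
      have h1 : g ⟨r • a, Submodule.smul_mem _ r ha⟩ = r • g ⟨a, ha⟩ :=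
        map_smul g r ⟨a, ha⟩
      rw [h1, DFinsupp.smul_apply, iha l hl, smul_zero]
  have ex : ∀ l : Λ, ∃ h : A →ₗ[A] J l, ∀ (x : A) (hx : x ∈ Submodule.span A (s : Set A)),
      h x = (g ⟨x, hx⟩) l := by
    intro l
    by_cases hl : l ∈ T
    · obtain ⟨h, hh⟩ := (Module.Baer.of_injective (hJ l)) (Submodule.span A (s : Set A))
        ((DFinsupp.lapply l : (⨁ l, J l) →ₗ[A] J l).comp g)
      exact ⟨h, hh⟩
    · exact ⟨0, fun x hx => by rw [LinearMap.zero_apply, claim x hx l hl]⟩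
  choose H hH using ex
  refine ⟨∑ l ∈ T, (DirectSum.lof A Λ J l).comp (H l), fun x hx => ?_⟩
  have : (∑ l ∈ T, (DirectSum.lof A Λ J l).comp (H l)) x
      = ∑ l ∈ T, DirectSum.of J l ((g ⟨x, hx⟩) l) := by
    rw [LinearMap.sum_apply]
    exact Finset.sum_congr rfl fun l _ => by
      rw [LinearMap.comp_apply, hH l x hx, DirectSum.lof_eq_of]
  exact this.trans (sum_of_eq (Λ := Λ) (J := J) T _ (claim x hx))

end Helpers

open CategoryTheory in
lemma exists_emb (A : Type u) [Ring A] (N : ModuleCat.{u} A) :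
    ∃ (Q : ModuleCat.{u} A) (f : N →ₗ[A] Q),
      Module.Injective A Q ∧ Function.Injective f := by
  refine ⟨Injective.under N, (Injective.ι N).hom, ?_, ?_⟩
  · have h : CategoryTheory.Injective (Injective.under N) := inferInstance
    have h2 : CategoryTheory.Injective (ModuleCat.of A (Injective.under N).carrier) := h
    exact Module.injective_module_of_injective_object A _
  · exact (ModuleCat.mono_iff_injective (Injective.ι N)).mp inferInstance

/-- **Statement 17** (Lemma 3.29 of the paper).  Let `A` be a right Noetherian
ring.  An `A`-module `M` is finitely generated if and only if for every small
family `(J_λ)_{λ ∈ Λ}` of injective `A`-modules the canonical homomorphism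
`⊕_λ Hom_A(M, J_λ) → Hom_A(M, ⊕_λ J_λ)` is an isomorphism. -/
theorem statement17 (A : Type u) [Ring A] (hA : IsNoetherianRing A)
    (M : Type u) [AddCommGroup M] [Module A M] :
    Module.Finite A M ↔
      ∀ (Λ : Type u) (_ : DecidableEq Λ) (J : Λ → Type u)
        (_ : ∀ l, AddCommGroup (J l)) (_ : ∀ l, Module A (J l)),
        (∀ l, Module.Injective A (J l)) →
        Function.Bijective (canonHom A M Λ J) := by
  classical
  constructor
  · -- easy direction
    intro hM Λ _ J _ _ _hJ
    constructor
    · intro F G hFG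
      refine DFinsupp.ext fun l => LinearMap.ext fun x => ?_
      rw [← canonHom_apply_apply A M Λ J F x l, ← canonHom_apply_apply A M Λ J G x l, hFG]
    · intro g
      obtain ⟨s, hs⟩ := hM.fg_top
      set S : Finset Λ := s.attach.sup (fun x => (g x.1).support) with hS
      have claim : ∀ (x : M), ∀ l ∉ S, (g x) l = 0 := by
        intro x
        have hx : x ∈ Submodule.span A (s : Set M) := hs.symm ▸ Submodule.mem_top
        induction hx using Submodule.span_induction with
        | mem a ha =>
          intro l hl
          have hmem : (g a).support ≤ S :=
            Finset.le_sup (f := fun x : {x // x ∈ s} => (g x.1).support)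
              (Finset.mem_attach s ⟨a, ha⟩)
          exact DFinsupp.notMem_support_iff.mp (fun h => hl (hmem h))
        | zero => intro l _; rw [map_zero, DFinsupp.zero_apply]
        | add a b _ _ iha ihb =>
          intro l hl
          rw [map_add, DFinsupp.add_apply, iha l hl, ihb l hl, add_zero]
        | smul r a _ iha =>
          intro l hl
          rw [map_smul, DFinsupp.smul_apply, iha l hl, smul_zero]
      refine ⟨∑ l ∈ S, DirectSum.of (fun l => M →ₗ[A] J l) l
        ((DFinsupp.lapply l : (⨁ l, J l) →ₗ[A] J l).comp g), ?_⟩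
      rw [map_sum]
      refine LinearMap.ext fun x => ?_
      have h1 : ∀ l ∈ S, canonHom A M Λ J
          (DirectSum.of (fun l => M →ₗ[A] J l) l
            ((DFinsupp.lapply l : (⨁ l, J l) →ₗ[A] J l).comp g))
          = (DirectSum.lof A Λ J l).comp
            ((DFinsupp.lapply l : (⨁ l, J l) →ₗ[A] J l).comp g) := by
        intro l _
        rw [canonHom, DirectSum.toAddMonoid_of]
        rfl
      rw [LinearMap.sum_apply, Finset.sum_congr rfl (fun l hl => by rw [h1 l hl])]
      have h2 : ∑ l ∈ S, ((DirectSum.lof A Λ J l).comp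
            ((DFinsupp.lapply l : (⨁ l, J l) →ₗ[A] J l).comp g)) x
          = ∑ l ∈ S, DirectSum.of J l ((g x) l) := by
        refine Finset.sum_congr rfl fun l _ => by
          rw [LinearMap.comp_apply, LinearMap.comp_apply, DirectSum.lof_eq_of]
          rfl
      rw [h2, sum_of_eq (Λ := Λ) (J := J) S _ (claim x)]
  · -- hard direction
    intro h
    by_contra hMfin
    have hfg : ¬(⊤ : Submodule A M).FG := fun h' => hMfin ⟨h'⟩
    have stepex : ∀ P : Submodule A M, P.FG → ∃ x, x ∉ P := by
      intro P hP
      by_contra hc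
      push_neg at hc
      exact hfg (Submodule.eq_top_iff'.mpr hc ▸ hP)
    let step : {P : Submodule A M // P.FG} → {P : Submodule A M // P.FG} :=
      fun P => ⟨P.1 ⊔ Submodule.span A {Classical.choose (stepex P.1 P.2)},
        P.2.sup (Submodule.fg_span_singleton _)⟩
    let Nc : ℕ → {P : Submodule A M // P.FG} := fun n => step^[n] ⟨⊥, Submodule.fg_bot⟩
    have hsucc : ∀ n, Nc (n+1) = step (Nc n) := fun n =>
      Function.iterate_succ_apply' step n _
    have hxs : ∀ n, ∃ x : M, x ∈ (Nc (n+1)).1 ∧ x ∉ (Nc n).1 := by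
      intro n
      refine ⟨Classical.choose (stepex (Nc n).1 (Nc n).2), ?_, Classical.choose_spec (stepex (Nc n).1 (Nc n).2)⟩
      rw [hsucc n]
      exact le_sup_right (a := (Nc n).1) (Submodule.mem_span_singleton_self _)
    choose xs hxmem hxnot using hxs
    have hmono : Monotone (fun n => (Nc n).1) := by
      apply monotone_nat_of_le_succ
      intro n
      rw [hsucc n]
      exact le_sup_left
    -- the injective modules
    have emb := fun n : ℕ => exists_emb A (ModuleCat.of A (M ⧸ (Nc n).1))
    choose Qc e he1 he2 using emb
    let J : ULift.{u} ℕ → Type u := fun l => (Qc l.down).carrier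
    have hbij := h (ULift.{u} ℕ) inferInstance J (fun l => inferInstance)
      (fun l => inferInstance) (fun l => he1 l.down)
    -- the map to the product
    let pi : M →ₗ[A] ∀ l : ULift.{u} ℕ, J l :=
      LinearMap.pi (fun l => (e l.down).comp (Nc l.down).1.mkQ)
    let ι : (⨁ l : ULift.{u} ℕ, J l) →ₗ[A] ∀ l : ULift.{u} ℕ, J l :=
      LinearMap.pi (fun l => DFinsupp.lapply l)
    have hι : ∀ (F : ⨁ l : ULift.{u} ℕ, J l) (l : ULift.{u} ℕ), ι F l = F l :=
      fun F l => rfl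
    have hι_inj : Function.Injective ι := by
      intro a b hab
      exact DFinsupp.ext fun l => by
        rw [← hι a l, ← hι b l, hab]
    let NS : Submodule A M := ⨆ n, (Nc n).1
    have key : ∀ x ∈ NS, pi x ∈ LinearMap.range ι := by
      have : ∀ n : ℕ, (Nc n).1 ≤ Submodule.comap pi (LinearMap.range ι) := by
        intro n x hx
        simp only [Submodule.mem_comap]
        have hv : ∀ l ∉ (Finset.range n).image ULift.up.{u}, pi x l = 0 := by
          intro l hl
          have hln : n ≤ l.down := by
            by_contra hc
            push_neg at hc
            exact hl (Finset.mem_image_of_mem _ (Finset.mem_range.mpr hc))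
          have hx' : x ∈ (Nc l.down).1 := hmono hln hx
          have : (Nc l.down).1.mkQ x = 0 := (Submodule.Quotient.mk_eq_zero _).mpr hx'
          show (e l.down) ((Nc l.down).1.mkQ x) = 0
          rw [this, map_zero]
        obtain ⟨F, hF⟩ := exists_directSum_coe (Λ := ULift.{u} ℕ) (J := J)
          ((Finset.range n).image ULift.up.{u}) (pi x) hv
        exact ⟨F, funext fun l => (hι F l).trans (hF l)⟩
      exact fun x hx => by
        have := iSup_le this
        exact this hx
    let eqv : (⨁ l : ULift.{u} ℕ, J l) ≃ₗ[A] LinearMap.range ι :=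
      LinearEquiv.ofInjective ι hι_inj
    let f : NS →ₗ[A] ⨁ l : ULift.{u} ℕ, J l :=
      eqv.symm.toLinearMap ∘ₗ
        LinearMap.codRestrict (LinearMap.range ι) (pi ∘ₗ NS.subtype)
          (fun y => key y.1 y.2)
    have hf : ∀ y : NS, ι (f y) = pi y.1 := by
      intro y
      show ι (eqv.symm ⟨pi y.1, key y.1 y.2⟩) = pi y.1
      have h0 := eqv.apply_symm_apply ⟨pi y.1, key y.1 y.2⟩
      have h2 : ι (eqv.symm ⟨pi y.1, key y.1 y.2⟩)
          = ((eqv (eqv.symm ⟨pi y.1, key y.1 y.2⟩)) : ∀ l, J l) :=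
        (LinearEquiv.ofInjective_apply (h := hι_inj) ι _).symm
      exact h2.trans (congrArg Subtype.val h0)
    -- extend f to all of M
    obtain ⟨G, hG⟩ := (injective_directSum A (ULift.{u} ℕ) J hA (fun l => he1 l.down)).out
      NS.subtype (Submodule.injective_subtype NS) f
    obtain ⟨F, hF⟩ := hbij.2 G
    -- pick an index outside the support of F
    set n : ℕ := (F.support.image ULift.down).sup id + 1 with hn
    have hns : ULift.up.{u} n ∉ F.support := by
      intro hc
      have : n ∈ F.support.image ULift.down := Finset.mem_image_of_mem _ hc
      have h5 : n ≤ (F.support.image ULift.down).sup id := Finset.le_sup (f := id) this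
      omega
    have hFn : F (ULift.up.{u} n) = 0 := DFinsupp.notMem_support_iff.mp hns
    -- the contradiction
    have hxNS : xs n ∈ NS := Submodule.mem_iSup_of_mem (n+1) (hxmem n)
    have h1 : G (xs n) = f ⟨xs n, hxNS⟩ := hG ⟨xs n, hxNS⟩
    have h2 : G (xs n) (ULift.up.{u} n) = 0 := by
      rw [← hF, canonHom_apply_apply, hFn, LinearMap.zero_apply]
    have h3 : G (xs n) (ULift.up.{u} n) = (e n) ((Nc n).1.mkQ (xs n)) := by
      rw [h1, ← hι (f ⟨xs n, hxNS⟩) (ULift.up.{u} n), hf ⟨xs n, hxNS⟩]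
      rfl
    have h4 : (Nc n).1.mkQ (xs n) ≠ 0 := by
      intro hc
      exact hxnot n ((Submodule.Quotient.mk_eq_zero _).mp hc)
    refine h4 ?_
    have := h3.symm.trans h2
    exact (he2 n) (by rw [this, map_zero])

end DGPaper
end
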